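/- arXiv:2010.05100 — 2 statements merged into one kernel-verified Lean document; each statement's English description precedes it below -/
import Mathlib

section
/- The octonionic cosecant, defined by csc(z) := Σ_{n∈ℤ} (−1)ⁿ (z̄ + πn)/|z + πn|⁸, satisfies csc(z) = (1/64)·cot(z/2) − cot(z) for every z ∈ 𝕆 such that z + πn ≠ 0 for all n ∈ ℤ. -/
noncomputable section
open Real MeasureTheory

/-- The octonions `𝕆`, modeled as `ℝ⁸` with the Euclidean norm, endowed below with the
Cayley–Dickson (octonionic) multiplication. -/
abbrev O8 : Type := EuclideanSpace ℝ (Fin 8)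

namespace Octo

/-- The standard basis units `e₀ = 1, e₁, …, e₇`. -/
def ee : Fin 8 → O8 := fun i => EuclideanSpace.single i 1

/-- The octonionic multiplication table `(eᵢ · eⱼ)`, arising from the Cayley–Dickson doubling
of the quaternions (with `e₄ = e₁e₂`, `e₅ = e₁e₃`, `e₆ = e₂e₃`, `e₇ = (e₁e₂)e₃`). -/
def mulTable : Fin 8 → Fin 8 → O8 :=
  ![![ee 0, ee 1, ee 2, ee 3, ee 4, ee 5, ee 6, ee 7],
    ![ee 1, -ee 0, ee 4, ee 5, -ee 2, -ee 3, -ee 7, ee 6],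
    ![ee 2, -ee 4, -ee 0, ee 6, ee 1, ee 7, -ee 3, -ee 5],
    ![ee 3, -ee 5, -ee 6, -ee 0, -ee 7, ee 1, ee 2, ee 4],
    ![ee 4, ee 2, -ee 1, ee 7, -ee 0, -ee 6, ee 5, -ee 3],
    ![ee 5, ee 3, -ee 7, -ee 1, ee 6, -ee 0, -ee 4, ee 2],
    ![ee 6, ee 7, ee 3, -ee 2, -ee 5, ee 4, -ee 0, -ee 1],
    ![ee 7, -ee 6, ee 5, -ee 4, ee 3, -ee 2, ee 1, -ee 0]]

/-- Octonionic multiplication, extended bilinearly from the multiplication table. -/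
instance : Mul O8 := ⟨fun x y => ∑ i : Fin 8, ∑ j : Fin 8, (x i * y j) • mulTable i j⟩

instance : One O8 := ⟨ee 0⟩

/-- The real part `Re z = x₀` of an octonion. -/
def re (z : O8) : ℝ := z 0

/-- Octonionic conjugation `z̄ = x₀ - x₁e₁ - ⋯ - x₇e₇`. -/
def conj (z : O8) : O8 := (2 * z 0) • ee 0 - z

/-- The real number `r`, viewed as an octonion. -/
def ofReal (r : ℝ) : O8 := r • ee 0

/-- The octonionic Cauchy kernel `q₀(z) = z̄ / |z|⁸`. -/
def q0 (z : O8) : O8 := (‖z‖ ^ 8)⁻¹ • conj z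

/-- `u / |u|⁸` (numerator not conjugated). -/
def pk (u : O8) : O8 := (‖u‖ ^ 8)⁻¹ • u

/-- The octonionic Cauchy–Riemann operator `𝒟f = ∂f/∂x₀ + Σᵢ eᵢ ∂f/∂xᵢ`, applied from the left.
`f` is left 𝕆-regular on `U` if `Dl f z = 0` for all `z ∈ U`. -/
def Dl (f : O8 → O8) (z : O8) : O8 :=
  fderiv ℝ f z (ee 0) + ∑ i : Fin 7, ee i.succ * fderiv ℝ f z (ee i.succ)

/-- The octonionic Cauchy–Riemann operator applied from the right:
`f𝒟 = ∂f/∂x₀ + Σᵢ (∂f/∂xᵢ) eᵢ`. -/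
def Dr (f : O8 → O8) (z : O8) : O8 :=
  fderiv ℝ f z (ee 0) + ∑ i : Fin 7, fderiv ℝ f z (ee i.succ) * ee i.succ

/-- The singly-periodic octonionic monogenic cotangent
`cot z = Σ_{m ∈ ℤ} (z̄ + πm)/|z + πm|⁸`. -/
def octCot (z : O8) : O8 := ∑' m : ℤ, q0 (z + ofReal (π * m))

/-- The octonionic tangent `tan z = - cot (z + π/2)`. -/
def octTan (z : O8) : O8 := - octCot (z + ofReal (π / 2))

/-- The singly-periodic octonionic monogenic cosecant
`csc z = Σ_{n ∈ ℤ} (-1)ⁿ (z̄ + πn)/|z + πn|⁸`. -/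
def octCsc (z : O8) : O8 := ∑' n : ℤ, ((-1 : ℝ) ^ n) • q0 (z + ofReal (π * n))

end Octo

namespace Octo

lemma conj_apply (u : O8) (i : Fin 8) : conj u i = if i = 0 then u 0 else -u i := by
  simp only [conj, ee]
  by_cases hi : i = 0
  · subst hi
    simp only [PiLp.sub_apply, PiLp.smul_apply, EuclideanSpace.single_apply, if_pos rfl,
      smul_eq_mul, mul_one, if_pos rfl]
    norm_num
    ring
  · simp [hi, PiLp.sub_apply, PiLp.smul_apply, EuclideanSpace.single_apply, Ne.symm hi]

lemma conj_zero : conj (0 : O8) = 0 := by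
  ext i; rw [conj_apply]; split <;> simp

lemma norm_conj (u : O8) : ‖conj u‖ = ‖u‖ := by
  rw [EuclideanSpace.norm_eq, EuclideanSpace.norm_eq]
  congr 1
  refine Finset.sum_congr rfl fun i _ => ?_
  rcases eq_or_ne i 0 with rfl | hi
  · rw [conj_apply, if_pos rfl]
  · rw [conj_apply, if_neg hi]; simp

lemma norm_q0 {u : O8} (hu : u ≠ 0) : ‖q0 u‖ = (‖u‖ ^ 7)⁻¹ := by
  have h0 : ‖u‖ ≠ 0 := norm_ne_zero_iff.mpr hu
  rw [q0, norm_smul, norm_conj, Real.norm_eq_abs, abs_inv, abs_pow, abs_norm]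
  field_simp

lemma conj_smul (c : ℝ) (u : O8) : conj (c • u) = c • conj u := by
  ext i
  simp only [PiLp.smul_apply, conj_apply, smul_eq_mul]
  split <;> ring

lemma q0_half_smul (u : O8) : q0 (((1 : ℝ) / 2) • u) = (128 : ℝ) • q0 u := by
  rcases eq_or_ne u 0 with rfl | hu
  · simp [q0, conj_zero]
  · have h0 : ‖u‖ ≠ 0 := norm_ne_zero_iff.mpr hu
    rw [q0, q0, conj_smul, norm_smul, smul_smul, smul_smul]
    congr 1
    rw [Real.norm_eq_abs, show |(1 : ℝ) / 2| = 1 / 2 by norm_num]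
    field_simp
    ring

lemma norm_ofReal (r : ℝ) : ‖ofReal r‖ = |r| := by
  rw [ofReal, norm_smul, ee, EuclideanSpace.norm_single, norm_one, mul_one, Real.norm_eq_abs]

end Octo

/-- the octonionic cosecant `csc z = Σ_{n∈ℤ} (-1)ⁿ (z̄+πn)/|z+πn|⁸` satisfies
`csc z = (1/64) cot (z/2) - cot z`. -/
theorem octCsc_eq (z : O8) (h : ∀ n : ℤ, z + Octo.ofReal (π * n) ≠ 0) :
    Octo.octCsc z = (1 / 64 : ℝ) • Octo.octCot (((1 : ℝ) / 2) • z) - Octo.octCot z := by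
  classical
  set f : ℤ → O8 := fun n => Octo.q0 (z + Octo.ofReal (π * n)) with hf
  have hnormf : ∀ n : ℤ, ‖f n‖ = (‖z + Octo.ofReal (π * n)‖ ^ 7)⁻¹ := fun n =>
    Octo.norm_q0 (h n)
  have hsum : Summable f := by
    have hg : Summable fun n : ℤ => |1 / (n : ℝ) ^ 7| :=
      (Real.summable_one_div_int_pow.mpr (by norm_num)).abs
    refine Summable.of_norm_bounded_eventually hg ?_
    rw [Filter.eventually_cofinite]
    have hfin : Set.Finite (Set.Icc (-(⌈‖z‖ + 1⌉)) ⌈‖z‖ + 1⌉ : Set ℤ) := Set.finite_Icc _ _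
    refine hfin.subset fun n hn => ?_
    by_contra hmem
    apply hn
    simp only [Set.mem_Icc, not_and_or, not_le] at hmem
    have habs : ‖z‖ + 1 ≤ |(n : ℝ)| := by
      rcases hmem with h1 | h1
      · have h2 : (⌈‖z‖ + 1⌉ : ℤ) ≤ -n := by omega
        have h3 : (‖z‖ + 1 : ℝ) ≤ ((-n : ℤ) : ℝ) :=
          (Int.le_ceil _).trans (by exact_mod_cast h2)
        calc (‖z‖ + 1 : ℝ) ≤ ((-n : ℤ) : ℝ) := h3
        _ ≤ |(n : ℝ)| := by push_cast; exact neg_le_abs _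
      · have h3 : (‖z‖ + 1 : ℝ) ≤ ((n : ℤ) : ℝ) :=
          (Int.le_ceil _).trans (by exact_mod_cast h1.le)
        exact h3.trans (le_abs_self _)
    have hz1 : (1 : ℝ) ≤ |(n : ℝ)| := by
      have := norm_nonneg z; linarith
    have hlow : |(n : ℝ)| ≤ ‖z + Octo.ofReal (π * n)‖ := by
      have h1 : ‖Octo.ofReal (π * n)‖ ≤ ‖z + Octo.ofReal (π * n)‖ + ‖z‖ := by
        have h2 := norm_sub_le (z + Octo.ofReal (π * n)) z
        rwa [add_sub_cancel_left] at h2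
      have h3 : ‖Octo.ofReal (π * n)‖ = π * |(n : ℝ)| := by
        rw [Octo.norm_ofReal, abs_mul, abs_of_pos Real.pi_pos]
      have hpi : (3 : ℝ) ≤ π := by linarith [Real.pi_gt_three]
      nlinarith [norm_nonneg z, abs_nonneg (n : ℝ)]
    rw [hnormf n]
    have hpos : (0 : ℝ) < |(n : ℝ)| ^ 7 := by positivity
    rw [abs_div, abs_one, abs_pow, one_div]
    exact inv_anti₀ hpos (pow_le_pow_left₀ (by positivity) hlow 7)
  set g : ℤ → O8 := fun n => if Even n then f n else 0 with hgdef
  have hsumg : Summable g := by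
    have hind := hsum.indicator {n : ℤ | Even n}
    refine hind.congr fun n => ?_
    by_cases hn : Even n <;> simp [hgdef, Set.indicator, hn]
  have hinj : Function.Injective (fun m : ℤ => 2 * m) := fun a b hab => by
    dsimp at hab; omega
  have hrange : Function.support g ⊆ Set.range (fun m : ℤ => 2 * m) := by
    intro n hn
    have hev : Even n := by
      by_contra hc; apply hn; simp [hgdef, hc]
    obtain ⟨m, hm⟩ := hev
    exact ⟨m, by dsimp; omega⟩
  have hre : ∑' m : ℤ, g (2 * m) = ∑' n, g n := hinj.tsum_eq hrange
  have hg2 : ∀ m : ℤ, g (2 * m) = f (2 * m) := fun m => by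
    simp [hgdef, even_two_mul m]
  have hcot2 : Octo.octCot (((1 : ℝ) / 2) • z) = ∑' m : ℤ, (128 : ℝ) • f (2 * m) := by
    rw [Octo.octCot]
    refine tsum_congr fun m => ?_
    have harg : ((1 : ℝ) / 2) • z + Octo.ofReal (π * m)
        = ((1 : ℝ) / 2) • (z + Octo.ofReal (π * ((2 * m : ℤ) : ℝ))) := by
      rw [smul_add, Octo.ofReal, Octo.ofReal, smul_smul]
      congr 2
      push_cast; ring
    rw [harg, Octo.q0_half_smul]
  have hsum2 : Summable fun m : ℤ => f (2 * m) := by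
    have hc := hsumg.comp_injective hinj
    refine hc.congr fun m => ?_
    exact (hg2 m)
  have hcot2' : Octo.octCot (((1 : ℝ) / 2) • z) = (128 : ℝ) • ∑' n, g n := by
    rw [hcot2, Summable.tsum_const_smul (128 : ℝ) hsum2]
    congr 1
    rw [← hre]
    exact tsum_congr fun m => (hg2 m).symm
  have hpt : ∀ n : ℤ, ((-1 : ℝ) ^ n) • f n = (2 : ℝ) • g n - f n := by
    intro n
    by_cases hn : Even n
    · rw [hn.neg_one_zpow, one_smul]
      simp only [hgdef, if_pos hn]
      rw [two_smul]
      abel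
    · rw [(Int.not_even_iff_odd.mp hn).neg_one_zpow]
      simp only [hgdef, if_neg hn, smul_zero, zero_sub, neg_smul, one_smul]
  rw [Octo.octCsc]
  have hrw : ∑' n : ℤ, ((-1 : ℝ) ^ n) • f n = ∑' n : ℤ, ((2 : ℝ) • g n - f n) :=
    tsum_congr hpt
  rw [hrw, Summable.tsum_sub (hsumg.const_smul (2 : ℝ)) hsum,
    Summable.tsum_const_smul (2 : ℝ) hsumg, hcot2', Octo.octCot, smul_smul]
  norm_num
  rfl
end
end

section
/- The function f: 𝕆 → 𝕆, f(z) = x1 − x2·e4, satisfies 𝒟f = 0 (f is left 𝕆-regular on all of 𝕆), while the function g(z) := f(z)·e3 = x1·e3 − x2·e7 satisfies 𝒟g = 2e5 ≠ 0; consequently, left 𝕆-regular functions do not form a right 𝕆-module. -/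
noncomputable section
open Real MeasureTheory

namespace Octo

lemma mul_def (x y : O8) :
    x * y = ∑ i : Fin 8, ∑ j : Fin 8, (x i * y j) • mulTable i j := rfl

lemma one_def : (1 : O8) = ee 0 := rfl

lemma ee_mul_ee (a b : Fin 8) : ee a * ee b = mulTable a b := by
  rw [mul_def]
  simp [ee, EuclideanSpace.single_apply, ite_smul, Finset.sum_ite_eq]

lemma mul_sub' (x y z : O8) : x * (y - z) = x * y - x * z := by
  simp [mul_def, PiLp.sub_apply, mul_sub, sub_smul, Finset.sum_sub_distrib]

lemma sub_mul' (x y z : O8) : (x - y) * z = x * z - y * z := by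
  simp [mul_def, PiLp.sub_apply, sub_mul, sub_smul, Finset.sum_sub_distrib]

lemma mul_zero' (x : O8) : x * 0 = 0 := by
  simp [mul_def]

lemma mul_neg' (x y : O8) : x * -y = -(x * y) := by
  simp [mul_def, PiLp.neg_apply, mul_neg, neg_smul, Finset.sum_neg_distrib]

lemma mul_smul' (c : ℝ) (x y : O8) : x * (c • y) = c • (x * y) := by
  simp [mul_def, PiLp.smul_apply, Finset.smul_sum, smul_smul, mul_left_comm]

lemma smul_mul' (c : ℝ) (x y : O8) : (c • x) * y = c • (x * y) := by
  simp [mul_def, PiLp.smul_apply, Finset.smul_sum, smul_smul, mul_assoc]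

/-- `f` as a continuous linear map. -/
def Lf : O8 →L[ℝ] O8 :=
  (EuclideanSpace.proj (1 : Fin 8)).smulRight (1 : O8)
    - (EuclideanSpace.proj (2 : Fin 8)).smulRight (ee 4)

lemma Lf_eq : (fun w : O8 => w 1 • (1 : O8) - w 2 • ee 4) = ⇑Lf := by
  funext w
  simp [Lf]

/-- `g` as a continuous linear map. -/
def Lg : O8 →L[ℝ] O8 :=
  (EuclideanSpace.proj (1 : Fin 8)).smulRight (ee 3)
    - (EuclideanSpace.proj (2 : Fin 8)).smulRight (ee 7)

lemma g_eq : (∀ w : O8, (w 1 • (1 : O8) - w 2 • ee 4) * ee 3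
    = w 1 • ee 3 - w 2 • ee 7) := by
  intro w
  rw [sub_mul', smul_mul', smul_mul', one_def, ee_mul_ee, ee_mul_ee]
  norm_num [mulTable]
  rfl

lemma Lg_eq : (fun w : O8 => (w 1 • (1 : O8) - w 2 • ee 4) * ee 3) = ⇑Lg := by
  funext w
  rw [g_eq]
  simp [Lg]

lemma ee_apply (a b : Fin 8) : ee a b = if b = a then 1 else 0 :=
  EuclideanSpace.single_apply a 1 b

lemma Dl_f (z : O8) : Dl (fun w => w 1 • (1 : O8) - w 2 • ee 4) z = 0 := by
  rw [Dl, Lf_eq, ContinuousLinearMap.fderiv]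
  rw [Fin.sum_univ_seven]
  simp only [show (Fin.succ 0 : Fin 8) = 1 from rfl, show (Fin.succ 1 : Fin 8) = 2 from rfl,
    show (Fin.succ 2 : Fin 8) = 3 from rfl, show (Fin.succ 3 : Fin 8) = 4 from rfl,
    show (Fin.succ 4 : Fin 8) = 5 from rfl, show (Fin.succ 5 : Fin 8) = 6 from rfl,
    show (Fin.succ 6 : Fin 8) = 7 from rfl]
  simp only [Lf, ContinuousLinearMap.sub_apply, ContinuousLinearMap.smulRight_apply,
    PiLp.proj_apply, ee_apply]
  simp (config := { decide := true })
  rw [one_def, mul_neg', mul_zero', mul_zero', mul_zero', mul_zero', mul_zero',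
    ee_mul_ee, ee_mul_ee]
  norm_num [mulTable]
  exact add_neg_cancel _

lemma Dl_g (z : O8) : Dl (fun w => (w 1 • (1 : O8) - w 2 • ee 4) * ee 3) z
    = (2 : ℝ) • ee 5 := by
  rw [Dl, Lg_eq, ContinuousLinearMap.fderiv]
  rw [Fin.sum_univ_seven]
  simp only [show (Fin.succ 0 : Fin 8) = 1 from rfl, show (Fin.succ 1 : Fin 8) = 2 from rfl,
    show (Fin.succ 2 : Fin 8) = 3 from rfl, show (Fin.succ 3 : Fin 8) = 4 from rfl,
    show (Fin.succ 4 : Fin 8) = 5 from rfl, show (Fin.succ 5 : Fin 8) = 6 from rfl,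
    show (Fin.succ 6 : Fin 8) = 7 from rfl]
  simp only [Lg, ContinuousLinearMap.sub_apply, ContinuousLinearMap.smulRight_apply,
    PiLp.proj_apply, ee_apply]
  simp (config := { decide := true })
  rw [mul_neg', mul_zero', mul_zero', mul_zero', mul_zero', mul_zero',
    ee_mul_ee, ee_mul_ee]
  rw [show mulTable 1 3 = ee 5 from rfl, show mulTable 2 7 = -ee 5 from rfl]
  module

lemma two_ee5_ne : (2 : ℝ) • ee 5 ≠ 0 := by
  intro h
  have := congrArg (fun v : O8 => v (5 : Fin 8)) h
  simp [PiLp.smul_apply, ee_apply] at this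

end Octo

/-- `f(z) = x₁ - x₂e₄` is left 𝕆-regular on all of `𝕆`, while
`g(z) = f(z)·e₃ = x₁e₃ - x₂e₇` satisfies `𝒟g = 2e₅ ≠ 0`; consequently left 𝕆-regular
functions do not form a right 𝕆-module. -/
theorem leftRegular_not_rightModule :
    (∀ z : O8, Octo.Dl (fun w => w 1 • (1 : O8) - w 2 • Octo.ee 4) z = 0) ∧
    (∀ w : O8, (w 1 • (1 : O8) - w 2 • Octo.ee 4) * Octo.ee 3
        = w 1 • Octo.ee 3 - w 2 • Octo.ee 7) ∧
    (∀ z : O8, Octo.Dl (fun w => (w 1 • (1 : O8) - w 2 • Octo.ee 4) * Octo.ee 3) z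
        = (2 : ℝ) • Octo.ee 5) ∧
    (2 : ℝ) • Octo.ee 5 ≠ 0 ∧
    ¬ ∀ (f : O8 → O8) (lam : O8),
        (∀ z : O8, Octo.Dl f z = 0) → ∀ z : O8, Octo.Dl (fun w => f w * lam) z = 0 := by
  refine ⟨Octo.Dl_f, Octo.g_eq, Octo.Dl_g, Octo.two_ee5_ne, fun h => ?_⟩
  have := h _ (Octo.ee 3) Octo.Dl_f 0
  rw [Octo.Dl_g 0] at this
  exact Octo.two_ee5_ne this
end
end
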